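/- There exists a feedforward ReLU network f : R → R^{Q+1} of depth 2Q+2 and width at most Q+1 such that for every integer x ∈ [0, 2^{Q+1}), f(x) equals the vector of binary digits (x_0, x_1, ..., x_Q) of x. -/

import Mathlib

open Finset

/-- The ReLU function. -/
def relu (t : ℝ) : ℝ := max t 0

/-- Evaluation of a feedforward ReLU network of uniform width `w` with `L`
layers: each layer is `z ↦ σ(W_l z + b_l)` with `σ` the componentwise ReLU.
(A network of width at most `w` embeds into such a network by padding with
zero rows, since `σ(0) = 0`.) -/
noncomputable def netEval {w : ℕ} :
    (L : ℕ) → (ℕ → Matrix (Fin w) (Fin w) ℝ) → (ℕ → Fin w → ℝ) →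
      (Fin w → ℝ) → (Fin w → ℝ)
  | 0, _, _, z => z
  | L + 1, W, b, z => fun i => relu ((W L).mulVec (netEval L W b z) i + b L i)


lemma netEval_succ {w : ℕ} (L : ℕ) (W : ℕ → Matrix (Fin w) (Fin w) ℝ)
    (b : ℕ → Fin w → ℝ) (z : Fin w → ℝ) :
    netEval (L+1) W b z = fun i => relu ((W L).mulVec (netEval L W b z) i + b L i) := rfl

def ind {n : ℕ} (a j : Fin n) : ℝ := if j = a then 1 else 0

lemma mulVec_ind {n : ℕ} (c1 c2 : Fin n → ℝ) (a1 a2 : Fin n → Fin n) (v : Fin n → ℝ) (i : Fin n) :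
    (Matrix.of fun i j => c1 i * ind (a1 i) j + c2 i * ind (a2 i) j).mulVec v i
      = c1 i * v (a1 i) + c2 i * v (a2 i) := by
  simp [Matrix.mulVec, dotProduct, ind, add_mul, mul_ite, ite_mul,
    Finset.sum_add_distrib, Finset.sum_ite_eq, Finset.sum_ite_eq']

lemma relu_of_nonneg {t : ℝ} (h : 0 ≤ t) : relu t = t := max_eq_left h
lemma relu_of_nonpos {t : ℝ} (h : t ≤ 0) : relu t = 0 := max_eq_right h

noncomputable def bitR (x m : ℕ) : ℝ := if Nat.testBit x m then 1 else 0

lemma relu_bitR (x m : ℕ) : relu (bitR x m) = bitR x m := by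
  unfold bitR; split <;> simp [relu]

lemma testBit_iff_le (x m : ℕ) : Nat.testBit x m = true ↔ 2^m ≤ x % 2^(m+1) := by
  rw [Nat.testBit_eq_decide_div_mod_eq, decide_eq_true_iff]
  have h1 : x % 2^(m+1) = x % 2^m + 2^m * (x / 2^m % 2) := by rw [pow_succ, Nat.mod_mul]
  have h2 : x % 2^m < 2^m := Nat.mod_lt _ (Nat.pow_pos (n := m) (by norm_num))
  rcases Nat.mod_two_eq_zero_or_one (x / 2^m) with h3 | h3 <;> rw [h3] at h1 <;> omega

lemma pq (x m : ℕ) :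
    relu (1 - relu (((x % 2^(m+1) : ℕ) : ℝ) - 2^m + 1)) = 1 - bitR x m := by
  by_cases h : Nat.testBit x m
  · have hle : 2^m ≤ x % 2^(m+1) := (testBit_iff_le x m).1 h
    have hleR : (2^m : ℝ) ≤ ((x % 2^(m+1) : ℕ) : ℝ) := by exact_mod_cast hle
    have hin : relu (((x % 2^(m+1) : ℕ) : ℝ) - 2^m + 1) = ((x % 2^(m+1) : ℕ) : ℝ) - 2^m + 1 :=
      relu_of_nonneg (by linarith)
    rw [hin, show (1:ℝ) - (((x % 2^(m+1) : ℕ) : ℝ) - 2^m + 1) = 2^m - ((x % 2^(m+1) : ℕ) : ℝ) by ring]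
    rw [relu_of_nonpos (by linarith), bitR, if_pos h];
    try ring
  · have hlt : x % 2^(m+1) < 2^m := by
      rcases Nat.lt_or_ge (x % 2^(m+1)) (2^m) with h' | h'
      · exact h'
      · exact absurd ((testBit_iff_le x m).2 h') (by simp [h])
    have : ((x % 2^(m+1) : ℕ) : ℝ) + 1 ≤ (2^m : ℝ) := by exact_mod_cast hlt
    have hin : relu (((x % 2^(m+1) : ℕ) : ℝ) - 2^m + 1) = 0 :=
      relu_of_nonpos (by linarith)
    rw [hin, show (1:ℝ) - 0 = 1 by ring, relu_of_nonneg (by norm_num), bitR, if_neg h];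
    try ring

lemma bitR_nat (x m : ℕ) : bitR x m = ((x / 2^m % 2 : ℕ) : ℝ) := by
  unfold bitR
  rw [Nat.testBit_eq_decide_div_mod_eq]
  rcases Nat.mod_two_eq_zero_or_one (x / 2^m) with h | h <;> simp [h]

lemma mod_split (x m : ℕ) :
    ((x % 2^(m+1) : ℕ) : ℝ) = ((x % 2^m : ℕ) : ℝ) + 2^m * bitR x m := by
  have h1 : x % 2^(m+1) = x % 2^m + 2^m * (x / 2^m % 2) := by rw [pow_succ, Nat.mod_mul]
  rw [bitR_nat, h1]; push_cast;
    try ring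

def idx (Q t : ℕ) : Fin (Q+1) := ⟨min t Q, by omega⟩

lemma idx_val {Q t : ℕ} (h : t ≤ Q) : ((idx Q t : Fin (Q+1)) : ℕ) = t := by
  simp [idx]; omega

lemma idx_zero (Q : ℕ) : idx Q 0 = 0 := by
  apply Fin.ext; simp [idx]

def mOf (Q ℓ : ℕ) : ℕ := Q + 1 - (ℓ+1)/2

noncomputable def C1 (Q ℓ : ℕ) (i : Fin (Q+1)) : ℝ :=
  if ℓ = 0 then (if (i:ℕ) = 0 ∨ (i:ℕ) = Q then 1 else 0)
  else if ℓ = 2*Q+1 then 1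
  else if 2*Q+1 < ℓ then 0
  else if ℓ % 2 = 1 then
    (if (i:ℕ) = 0 then 1 else if (i:ℕ) = mOf Q ℓ then -1
     else if mOf Q ℓ < (i:ℕ) then 1 else 0)
  else
    (if (i:ℕ) = mOf Q ℓ then -1 else if (i:ℕ) = mOf Q ℓ - 1 then 1
     else if (i:ℕ) = 0 then 1 else if mOf Q ℓ < (i:ℕ) then 1 else 0)

def A1 (Q ℓ : ℕ) (i : Fin (Q+1)) : Fin (Q+1) :=
  if ℓ = 0 then idx Q 0
  else if ℓ = 2*Q+1 then i
  else if 2*Q+1 < ℓ then i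
  else if ℓ % 2 = 1 then
    (if (i:ℕ) = 0 then idx Q 0 else if (i:ℕ) = mOf Q ℓ then idx Q (mOf Q ℓ) else i)
  else
    (if (i:ℕ) = mOf Q ℓ then idx Q (mOf Q ℓ)
     else if (i:ℕ) = mOf Q ℓ - 1 then idx Q 0
     else if (i:ℕ) = 0 then idx Q 0 else i)

noncomputable def C2 (Q ℓ : ℕ) (i : Fin (Q+1)) : ℝ :=
  if ℓ = 0 ∨ ℓ % 2 = 1 ∨ 2*Q+1 ≤ ℓ then 0
  else if (i:ℕ) = mOf Q ℓ then 0
  else if (i:ℕ) = mOf Q ℓ - 1 then 2^(mOf Q ℓ)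
  else if (i:ℕ) = 0 then 2^(mOf Q ℓ)
  else 0

noncomputable def BB (Q ℓ : ℕ) (i : Fin (Q+1)) : ℝ :=
  if ℓ = 0 then (if (i:ℕ) = Q then 1 - 2^Q else 0)
  else if ℓ = 2*Q+1 then 0
  else if 2*Q+1 < ℓ then 0
  else if ℓ % 2 = 1 then (if (i:ℕ) = mOf Q ℓ then 1 else 0)
  else if (i:ℕ) = mOf Q ℓ then 1
  else if (i:ℕ) = mOf Q ℓ - 1 then 1 - 2^(mOf Q ℓ) - 2^(mOf Q ℓ - 1)
  else if (i:ℕ) = 0 then -2^(mOf Q ℓ)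
  else 0

def A2 (Q ℓ : ℕ) (_ : Fin (Q+1)) : Fin (Q+1) := idx Q (mOf Q ℓ)

noncomputable def netW (Q ℓ : ℕ) : Matrix (Fin (Q+1)) (Fin (Q+1)) ℝ :=
  Matrix.of fun i j => C1 Q ℓ i * ind (A1 Q ℓ i) j + C2 Q ℓ i * ind (A2 Q ℓ i) j

lemma netW_apply (Q ℓ : ℕ) (v : Fin (Q+1) → ℝ) (i : Fin (Q+1)) :
    (netW Q ℓ).mulVec v i = C1 Q ℓ i * v (A1 Q ℓ i) + C2 Q ℓ i * v (A2 Q ℓ i) :=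
  mulVec_ind _ _ _ _ v i

lemma zrow (Q : ℕ) (v : Fin (Q+1) → ℝ) (i : Fin (Q+1)) :
    (netW Q 0).mulVec v i + BB Q 0 i =
      (if (i:ℕ) = 0 ∨ (i:ℕ) = Q then v (idx Q 0) else 0)
        + (if (i:ℕ) = Q then 1 - 2^Q else 0) := by
  rw [netW_apply]
  simp only [C1, A1, C2, A2, BB, if_pos rfl]
  by_cases h : (i:ℕ) = 0 ∨ (i:ℕ) = Q <;> simp [h]

lemma idrow (Q : ℕ) (v : Fin (Q+1) → ℝ) (i : Fin (Q+1)) :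
    (netW Q (2*Q+1)).mulVec v i + BB Q (2*Q+1) i = v i := by
  rw [netW_apply]
  have h0 : 2*Q+1 ≠ 0 := by omega
  simp only [C1, A1, C2, A2, BB, if_neg h0, if_pos rfl]
  have : (2*Q+1 = 0 ∨ (2*Q+1) % 2 = 1 ∨ 2*Q+1 ≤ 2*Q+1) := by omega
  simp [this]

lemma qrow (Q k : ℕ) (hk : k < Q) (v : Fin (Q+1) → ℝ) (i : Fin (Q+1)) :
    (netW Q (2*k+1)).mulVec v i + BB Q (2*k+1) i =
      if (i:ℕ) = 0 then v (idx Q 0)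
      else if (i:ℕ) = Q - k then 1 - v (idx Q (Q-k))
      else if Q - k < (i:ℕ) then v i
      else 0 := by
  have h0 : 2*k+1 ≠ 0 := by omega
  have h1 : 2*k+1 ≠ 2*Q+1 := by omega
  have h2 : ¬ (2*Q+1 < 2*k+1) := by omega
  have h3 : (2*k+1) % 2 = 1 := by omega
  have hm : mOf Q (2*k+1) = Q - k := by unfold mOf; omega
  have hC2 : (2*k+1 = 0 ∨ (2*k+1) % 2 = 1 ∨ 2*Q+1 ≤ 2*k+1) := by omega
  rw [netW_apply]
  simp only [C1, A1, C2, A2, BB, if_neg h0, if_neg h1, if_neg h2, if_pos h3, if_pos hC2, hm]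
  have hQk : ¬ (Q - k = 0) := by omega
  by_cases hi0 : (i:ℕ) = 0
  · have h4 : ¬ ((i:ℕ) = Q - k) := by omega
    have h5 : ¬ (0 = Q - k) := by omega
    simp [hi0, h4, h5]
  · by_cases him : (i:ℕ) = Q - k
    · simp only [hi0, him, if_neg hQk, if_pos rfl, if_neg hi0]; simp [hQk]; ring
    · by_cases hgt : Q - k < (i:ℕ) <;> simp [hi0, him, hgt]

lemma brow (Q k : ℕ) (hk : k < Q) (v : Fin (Q+1) → ℝ) (i : Fin (Q+1)) :
    (netW Q (2*k+2)).mulVec v i + BB Q (2*k+2) i =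
      if (i:ℕ) = Q - k then 1 - v (idx Q (Q-k))
      else if (i:ℕ) = Q - k - 1 then
        v (idx Q 0) + 2^(Q-k) * v (idx Q (Q-k)) + (1 - 2^(Q-k) - 2^(Q-k-1))
      else if (i:ℕ) = 0 then v (idx Q 0) + 2^(Q-k) * v (idx Q (Q-k)) - 2^(Q-k)
      else if Q - k < (i:ℕ) then v i
      else 0 := by
  have h0 : 2*k+2 ≠ 0 := by omega
  have h1 : 2*k+2 ≠ 2*Q+1 := by omega
  have h2 : ¬ (2*Q+1 < 2*k+2) := by omega
  have h3 : ¬ ((2*k+2) % 2 = 1) := by omega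
  have hm : mOf Q (2*k+2) = Q - k := by unfold mOf; omega
  have hC2 : ¬ (2*k+2 = 0 ∨ (2*k+2) % 2 = 1 ∨ 2*Q+1 ≤ 2*k+2) := by omega
  rw [netW_apply]
  simp only [C1, A1, C2, A2, BB, if_neg h0, if_neg h1, if_neg h2, if_neg h3, if_neg hC2, hm]
  have hQk : ¬ (Q - k = 0) := by omega
  have h6 : ¬ (Q - k - 1 = Q - k) := by omega
  by_cases him : (i:ℕ) = Q - k
  · simp [him]; try ring
  · by_cases him1 : (i:ℕ) = Q - k - 1
    · simp [him, him1, h6]; try ring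
    · by_cases hi0 : (i:ℕ) = 0
      · have h7 : ¬ (0 = Q - k) := by omega
        have h8 : ¬ (0 = Q - k - 1) := by omega
        simp [him, him1, hi0, h7, h8]; try ring
      · by_cases hgt : Q - k < (i:ℕ) <;> simp [him, him1, hi0, hgt]

lemma netEval_succ_apply {w : ℕ} (L : ℕ) (W : ℕ → Matrix (Fin w) (Fin w) ℝ)
    (b : ℕ → Fin w → ℝ) (z : Fin w → ℝ) (i : Fin w) :
    netEval (L+1) W b z i = relu ((W L).mulVec (netEval L W b z) i + b L i) := rfl

noncomputable def SS (Q x k : ℕ) : Fin (Q+1) → ℝ := fun i =>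
  if Q - k < (i:ℕ) then bitR x i
  else if (i:ℕ) = Q - k then relu (((x % 2^(Q+1-k) : ℕ) : ℝ) - 2^(Q-k) + 1)
  else if (i:ℕ) = 0 then ((x % 2^(Q+1-k) : ℕ) : ℝ)
  else 0

lemma Tstep (Q x k : ℕ) (hk : k < Q) :
    (fun i => relu ((netW Q (2*k+1)).mulVec (SS Q x k) i + BB Q (2*k+1) i)) =
      fun i : Fin (Q+1) =>
        if Q - k < (i:ℕ) then bitR x i
        else if (i:ℕ) = Q - k then 1 - bitR x (Q-k)
        else if (i:ℕ) = 0 then ((x % 2^(Q+1-k) : ℕ) : ℝ)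
        else 0 := by
  have hQk : ¬ (Q - k = 0) := by omega
  funext i
  rw [qrow Q k hk]
  by_cases hi0 : (i:ℕ) = 0
  · have h4 : ¬ ((i:ℕ) = Q - k) := by omega
    have h5 : ¬ (Q - k < (i:ℕ)) := by omega
    have hS : SS Q x k (idx Q 0) = ((x % 2^(Q+1-k) : ℕ) : ℝ) := by
      unfold SS; rw [idx_zero]; simp [hQk, Ne.symm hQk]
    rw [if_pos hi0, hS, if_neg h5, if_neg h4, if_pos hi0,
      relu_of_nonneg (by positivity)]
  · by_cases him : (i:ℕ) = Q - k
    · have h5 : ¬ (Q - k < (i:ℕ)) := by omega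
      have hS : SS Q x k (idx Q (Q-k)) =
          relu (((x % 2^(Q+1-k) : ℕ) : ℝ) - 2^(Q-k) + 1) := by
        unfold SS; rw [idx_val (by omega)]; simp
      rw [if_neg hi0, if_pos him, hS, if_neg h5, if_pos him]
      rw [show Q+1-k = (Q-k)+1 by omega]
      exact pq x (Q-k)
    · by_cases hgt : Q - k < (i:ℕ)
      · have hS : SS Q x k i = bitR x i := by unfold SS; rw [if_pos hgt]
        rw [if_neg hi0, if_neg him, if_pos hgt, hS, relu_bitR, if_pos hgt]
      · rw [if_neg hi0, if_neg him, if_neg hgt, if_neg hgt, if_neg him, if_neg hi0]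
        exact relu_of_nonpos le_rfl

lemma Bstep (Q x k : ℕ) (hk : k < Q) (v : Fin (Q+1) → ℝ)
    (hv0 : v (idx Q 0) = ((x % 2^(Q+1-k) : ℕ) : ℝ))
    (hvm : v (idx Q (Q-k)) = 1 - bitR x (Q-k))
    (hvgt : ∀ i : Fin (Q+1), Q - k < (i:ℕ) → v i = bitR x i)
    (i : Fin (Q+1)) :
    relu ((netW Q (2*k+2)).mulVec v i + BB Q (2*k+2) i) = SS Q x (k+1) i := by
  have hQk : ¬ (Q - k = 0) := by omega
  have hm1 : Q - (k+1) = Q - k - 1 := by omega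
  have hsplit : ((x % 2^(Q+1-k) : ℕ) : ℝ)
      = ((x % 2^(Q+1-(k+1)) : ℕ) : ℝ) + 2^(Q-k) * bitR x (Q-k) := by
    rw [show Q+1-k = (Q-k)+1 by omega, show Q+1-(k+1) = Q-k by omega]
    exact mod_split x (Q-k)
  rw [brow Q k hk]
  unfold SS
  by_cases him : (i:ℕ) = Q - k
  · rw [if_pos him, hvm,
      show (1:ℝ) - (1 - bitR x (Q-k)) = bitR x (Q-k) by ring, relu_bitR,
      if_pos (show Q-(k+1) < (i:ℕ) by omega), him]
  · by_cases him1 : (i:ℕ) = Q - k - 1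
    · rw [if_neg him, if_pos him1, hv0, hvm, hsplit,
        show ((x % 2^(Q+1-(k+1)) : ℕ) : ℝ) + 2^(Q-k) * bitR x (Q-k)
            + 2^(Q-k) * (1 - bitR x (Q-k)) + (1 - 2^(Q-k) - 2^(Q-k-1))
          = ((x % 2^(Q+1-(k+1)) : ℕ) : ℝ) - 2^(Q-(k+1)) + 1 by rw [hm1]; ring,
        if_neg (show ¬ Q-(k+1) < (i:ℕ) by omega),
        if_pos (show (i:ℕ) = Q-(k+1) by omega)]
    · by_cases hi0 : (i:ℕ) = 0
      · rw [if_neg him, if_neg him1, if_pos hi0, hv0, hvm, hsplit,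
          show ((x % 2^(Q+1-(k+1)) : ℕ) : ℝ) + 2^(Q-k) * bitR x (Q-k)
              + 2^(Q-k) * (1 - bitR x (Q-k)) - 2^(Q-k)
            = ((x % 2^(Q+1-(k+1)) : ℕ) : ℝ) by ring,
          relu_of_nonneg (by positivity),
          if_neg (show ¬ Q-(k+1) < (i:ℕ) by omega),
          if_neg (show ¬ (i:ℕ) = Q-(k+1) by omega), if_pos hi0]
      · by_cases hgt : Q - k < (i:ℕ)
        · rw [if_neg him, if_neg him1, if_neg hi0, if_pos hgt, hvgt i hgt, relu_bitR,
            if_pos (show Q-(k+1) < (i:ℕ) by omega)]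
        · rw [if_neg him, if_neg him1, if_neg hi0, if_neg hgt,
            relu_of_nonpos le_rfl,
            if_neg (show ¬ Q-(k+1) < (i:ℕ) by omega),
            if_neg (show ¬ (i:ℕ) = Q-(k+1) by omega), if_neg hi0]

/-- There is a feedforward ReLU network `f : ℝ → ℝ^{Q+1}` of depth `2Q+2` and
width at most `Q+1` computing, for every integer `x ∈ [0, 2^{Q+1})`, the vector
of binary digits `(x_0, …, x_Q)` of `x`.  The scalar input `x` is embedded as
the first coordinate of a width-`(Q+1)` state. -/
theorem exists_binary_decomposition_network (Q : ℕ) :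
    ∃ (W : ℕ → Matrix (Fin (Q + 1)) (Fin (Q + 1)) ℝ) (b : ℕ → Fin (Q + 1) → ℝ),
      ∀ x : ℕ, x < 2 ^ (Q + 1) →
        ∀ q : Fin (Q + 1),
          netEval (2 * Q + 2) W b
              (fun j => if j = 0 then (x : ℝ) else 0) q =
            if Nat.testBit x (q : ℕ) then 1 else 0 := by
  refine ⟨netW Q, BB Q, ?_⟩
  intro x hx q
  have hxmod : x % 2^(Q+1) = x := Nat.mod_eq_of_lt hx
  set z : Fin (Q+1) → ℝ := fun j => if j = 0 then (x : ℝ) else 0 with hzdef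
  have main : ∀ k, k ≤ Q → netEval (2*k+1) (netW Q) (BB Q) z = SS Q x k := by
    intro k
    induction k with
    | zero =>
      intro _
      funext i
      rw [show 2*0+1 = 0+1 by norm_num, netEval_succ_apply]
      rw [show netEval 0 (netW Q) (BB Q) z = z from rfl, zrow]
      have hz0 : z (idx Q 0) = (x : ℝ) := by rw [idx_zero]; simp [hzdef]
      unfold SS
      simp only [Nat.sub_zero, Nat.add_sub_cancel]
      have hnotlt : ¬ (Q < (i:ℕ)) := by omega
      rw [if_neg hnotlt]
      by_cases hiQ : (i:ℕ) = Q
      · rw [if_pos (Or.inr hiQ), if_pos hiQ, if_pos hiQ, hz0, hxmod]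
        congr 1; ring
      · rw [if_neg hiQ, if_neg hiQ]
        by_cases hi0 : (i:ℕ) = 0
        · rw [if_pos (Or.inl hi0), if_pos hi0, hz0, hxmod, add_zero,
            relu_of_nonneg (by positivity)]
        · rw [if_neg (by tauto : ¬((i:ℕ) = 0 ∨ (i:ℕ) = Q)), if_neg hi0, add_zero]
          exact relu_of_nonpos le_rfl
    | succ k ih =>
      intro hk1
      have hk : k < Q := by omega
      have ihh := ih (by omega)
      have hT : netEval (2*k+1+1) (netW Q) (BB Q) z =
          fun i : Fin (Q+1) =>
            if Q - k < (i:ℕ) then bitR x i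
            else if (i:ℕ) = Q - k then 1 - bitR x (Q-k)
            else if (i:ℕ) = 0 then ((x % 2^(Q+1-k) : ℕ) : ℝ)
            else 0 := by
        rw [netEval_succ, ihh, Tstep Q x k hk]
      have hQk : ¬ (Q - k = 0) := by omega
      funext i
      rw [show 2*(k+1)+1 = (2*k+1+1)+1 by ring, netEval_succ_apply, hT,
        show 2*k+1+1 = 2*k+2 by ring]
      refine Bstep Q x k hk _ ?_ ?_ ?_ i
      · rw [idx_zero]
        simp [hQk, Ne.symm hQk]
      · have e1 : ((idx Q (Q-k) : Fin (Q+1)) : ℕ) = Q - k := idx_val (by omega)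
        simp [e1]
      · intro j hj
        simp only [if_pos hj]
  rw [show 2*Q+2 = (2*Q+1)+1 by ring, netEval_succ_apply, main Q le_rfl, idrow]
  unfold SS
  simp only [Nat.sub_self]
  by_cases h0 : 0 < (q:ℕ)
  · rw [if_pos h0, relu_bitR]; rfl
  · have hq0 : (q:ℕ) = 0 := by omega
    rw [if_neg h0, if_pos hq0]
    rw [show Q+1-Q = 1 by omega]
    rw [show ((x % 2^1 : ℕ) : ℝ) - 2^0 + 1 = ((x % 2^1 : ℕ) : ℝ) by ring]
    have hin : relu (((x % 2^1 : ℕ) : ℝ)) = ((x % 2^1 : ℕ) : ℝ) :=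
      relu_of_nonneg (by positivity)
    rw [hin, hin, hq0]
    rw [show (if Nat.testBit x 0 then (1:ℝ) else 0) = bitR x 0 from rfl, bitR_nat]
    norm_num
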